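/- Let 0 < Y < 2, B > 0 and A ∈ ℝ with |A| < B, and define f(y) = e^{−(B²−A²)y/2} · J_Y(B²y) for y > 0, where J_Y(λ) = √(λ/(2π)) ∫_0^∞ e^{−λh/2} h^{(Y−1)/2} (1+h)^{−Y/2} dh. Then ∫_0^∞ y^{−(1+Y/2)} ( √(f(y)) − 1 )² dy < ∞. (This establishes that the CGMY time-change subordinator, whose Lévy density is f(y) times that of the one-sided stable Y/2 subordinator, is absolutely continuous with respect to the one-sided stable Y/2 subordinator.) -/

import Mathlib

open MeasureTheory Real Set

/-- `J_Y(λ) = √(λ/(2π)) ∫_0^∞ e^{-λh/2} h^{(Y-1)/2} (1+h)^{-Y/2} dh`. -/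
noncomputable def JFun (Y l : ℝ) : ℝ :=
  Real.sqrt (l / (2 * π)) *
    ∫ h in Ioi (0:ℝ), Real.exp (-(l * h / 2)) * h ^ ((Y-1)/2) * (1+h) ^ (-(Y/2))

lemma aux_eq (Y l : ℝ) {h : ℝ} (hh : 0 < h) :
    Real.exp (-(l * h / 2)) * h ^ ((Y-1)/2) * (1+h) ^ (-(Y/2)) =
      Real.exp (-(l * h / 2)) * (h ^ (-(1:ℝ)/2) * (h/(1+h)) ^ (Y/2)) := by
  have h1 : (0:ℝ) < 1 + h := by linarith
  rw [Real.div_rpow hh.le h1.le, Real.rpow_neg h1.le,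
    show (Y-1)/2 = -(1:ℝ)/2 + Y/2 by ring, Real.rpow_add hh]
  ring

-- integrability of the dominating function
lemma g0_integrable {l : ℝ} (hl : 0 < l) :
    IntegrableOn (fun h : ℝ => Real.exp (-(l * h / 2)) * h ^ (-(1:ℝ)/2)) (Ioi 0) := by
  have := integrableOn_rpow_mul_exp_neg_mul_rpow (p := 1) (s := -(1:ℝ)/2) (b := l/2)
    (by norm_num) one_pos (by linarith)
  refine this.congr_fun (fun x hx => ?_) measurableSet_Ioi
  simp only [Real.rpow_one]
  ring_nf

lemma g0_integral {l : ℝ} (hl : 0 < l) :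
    Real.sqrt (l / (2 * π)) *
      ∫ h in Ioi (0:ℝ), Real.exp (-(l * h / 2)) * h ^ (-(1:ℝ)/2) = 1 := by
  have h2 : (0:ℝ) < l / 2 := by linarith
  have key := Real.integral_rpow_mul_exp_neg_mul_Ioi (a := 1/2) (r := l/2)
    (by norm_num) h2
  have : (∫ h in Ioi (0:ℝ), Real.exp (-(l * h / 2)) * h ^ (-(1:ℝ)/2))
      = (1 / (l/2)) ^ ((1:ℝ)/2) * Real.Gamma (1/2) := by
    rw [← key]
    refine setIntegral_congr_fun measurableSet_Ioi (fun x hx => ?_)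
    rw [show (1:ℝ)/2 - 1 = -(1:ℝ)/2 by ring]
    rw [mul_comm]
    ring_nf
  rw [this, Real.Gamma_one_half_eq, ← Real.sqrt_eq_rpow, ← Real.sqrt_mul (by positivity),
    ← Real.sqrt_mul (by positivity)]
  rw [show l / (2*π) * (1/(l/2) * π) = 1 by field_simp]
  exact Real.sqrt_one

lemma JFun_bounds (Y l : ℝ) (hY0 : 0 < Y) (hY2 : Y < 2) (hl : 0 < l) :
    0 ≤ JFun Y l ∧ JFun Y l ≤ 1 ∧ 1 - 2 * Real.sqrt l ≤ JFun Y l := by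
  set g0 : ℝ → ℝ := fun h => Real.exp (-(l * h / 2)) * h ^ (-(1:ℝ)/2) with hg0
  set g : ℝ → ℝ := fun h => Real.exp (-(l * h / 2)) * h ^ ((Y-1)/2) * (1+h) ^ (-(Y/2)) with hg
  have hg0int : IntegrableOn g0 (Ioi 0) := g0_integrable hl
  -- pointwise bounds for h > 0
  have hbnd : ∀ h ∈ Ioi (0:ℝ), 0 ≤ g h ∧ g h ≤ g0 h ∧
      g0 h - g h ≤ h ^ (-(1:ℝ)/2) * (1/(1+h)) := by
    intro h hh
    rw [mem_Ioi] at hh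
    have h1 : (0:ℝ) < 1 + h := by linarith
    have hx0 : 0 < h / (1+h) := by positivity
    have hx1 : h / (1+h) ≤ 1 := by rw [div_le_one h1]; linarith
    have hgeq : g h = Real.exp (-(l * h / 2)) * (h ^ (-(1:ℝ)/2) * (h/(1+h)) ^ (Y/2)) :=
      aux_eq Y l hh
    have hrp : 0 < h ^ (-(1:ℝ)/2) := Real.rpow_pos_of_pos hh _
    have hfle1 : (h/(1+h)) ^ (Y/2) ≤ 1 := Real.rpow_le_one hx0.le hx1 (by linarith)
    have hfge : h/(1+h) ≤ (h/(1+h)) ^ (Y/2) := by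
      have := Real.rpow_le_rpow_of_exponent_ge hx0 hx1 (by linarith : Y/2 ≤ 1)
      rwa [Real.rpow_one] at this
    have hexp1 : Real.exp (-(l * h / 2)) ≤ 1 := by
      rw [Real.exp_le_one_iff]; nlinarith
    have hexp0 : 0 < Real.exp (-(l * h / 2)) := Real.exp_pos _
    refine ⟨by rw [hgeq]; positivity, ?_, ?_⟩
    · rw [hgeq, hg0]
      have : h ^ (-(1:ℝ)/2) * (h/(1+h)) ^ (Y/2) ≤ h ^ (-(1:ℝ)/2) * 1 := by
        exact mul_le_mul_of_nonneg_left hfle1 hrp.le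
      calc Real.exp (-(l * h / 2)) * (h ^ (-(1:ℝ)/2) * (h/(1+h)) ^ (Y/2))
          ≤ Real.exp (-(l * h / 2)) * (h ^ (-(1:ℝ)/2) * 1) :=
            mul_le_mul_of_nonneg_left this hexp0.le
        _ = Real.exp (-(l * h / 2)) * h ^ (-(1:ℝ)/2) := by ring
    · rw [hgeq, hg0]
      have e1 : Real.exp (-(l * h / 2)) * h ^ (-(1:ℝ)/2)
          - Real.exp (-(l * h / 2)) * (h ^ (-(1:ℝ)/2) * (h/(1+h)) ^ (Y/2))
          = Real.exp (-(l * h / 2)) * h ^ (-(1:ℝ)/2) * (1 - (h/(1+h)) ^ (Y/2)) := by ring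
      rw [e1]
      have h2 : 1 - (h/(1+h)) ^ (Y/2) ≤ 1/(1+h) := by
        have : (1:ℝ) - h/(1+h) = 1/(1+h) := by field_simp; ring
        linarith
      have h3 : 0 ≤ 1 - (h/(1+h)) ^ (Y/2) := by linarith
      calc Real.exp (-(l * h / 2)) * h ^ (-(1:ℝ)/2) * (1 - (h/(1+h)) ^ (Y/2))
          ≤ 1 * h ^ (-(1:ℝ)/2) * (1 - (h/(1+h)) ^ (Y/2)) := by
            apply mul_le_mul_of_nonneg_right _ h3
            exact mul_le_mul_of_nonneg_right hexp1 hrp.le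
        _ = h ^ (-(1:ℝ)/2) * (1 - (h/(1+h)) ^ (Y/2)) := by ring
        _ ≤ h ^ (-(1:ℝ)/2) * (1/(1+h)) := mul_le_mul_of_nonneg_left h2 hrp.le
  -- integrability of g
  have hgm : AEStronglyMeasurable g (volume.restrict (Ioi 0)) := by
    apply Measurable.aestronglyMeasurable
    fun_prop
  have hgint : IntegrableOn g (Ioi 0) := by
    refine hg0int.mono' hgm ?_
    filter_upwards [ae_restrict_mem measurableSet_Ioi] with h hh
    rw [Real.norm_eq_abs, abs_of_nonneg (hbnd h hh).1]
    exact (hbnd h hh).2.1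
  have hJeq : JFun Y l = Real.sqrt (l / (2 * π)) * ∫ h in Ioi (0:ℝ), g h := rfl
  have hsq : (0:ℝ) ≤ Real.sqrt (l / (2 * π)) := Real.sqrt_nonneg _
  have hJ0 : 0 ≤ JFun Y l := by
    rw [hJeq]
    exact mul_nonneg hsq (setIntegral_nonneg measurableSet_Ioi fun h hh => (hbnd h hh).1)
  have hle : (∫ h in Ioi (0:ℝ), g h) ≤ ∫ h in Ioi (0:ℝ), g0 h :=
    setIntegral_mono_on hgint hg0int measurableSet_Ioi (fun h hh => (hbnd h hh).2.1)
  have hJ1 : JFun Y l ≤ 1 := by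
    rw [hJeq, ← g0_integral hl]
    exact mul_le_mul_of_nonneg_left hle hsq
  -- lower bound
  set d : ℝ → ℝ := fun h => g0 h - g h with hd
  have hdint : IntegrableOn d (Ioi 0) := hg0int.sub hgint
  have hsplitset : Ioc (0:ℝ) 1 ∪ Ioi 1 = Ioi 0 := Ioc_union_Ioi_eq_Ioi zero_le_one
  have hd1int : IntegrableOn d (Ioc 0 1) := hdint.mono_set Ioc_subset_Ioi_self
  have hd2int : IntegrableOn d (Ioi 1) := hdint.mono_set (Ioi_subset_Ioi zero_le_one)
  have hr1int : IntegrableOn (fun h : ℝ => h ^ (-(1:ℝ)/2)) (Ioc 0 1) := by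
    rw [← intervalIntegrable_iff_integrableOn_Ioc_of_le zero_le_one]
    exact intervalIntegral.intervalIntegrable_rpow' (by norm_num)
  have hr2int : IntegrableOn (fun h : ℝ => h ^ (-(3:ℝ)/2)) (Ioi 1) :=
    integrableOn_Ioi_rpow_of_lt (by norm_num) one_pos
  have hv1 : (∫ h in Ioc (0:ℝ) 1, h ^ (-(1:ℝ)/2)) = 2 := by
    rw [← intervalIntegral.integral_of_le zero_le_one,
      integral_rpow (Or.inl (by norm_num))]
    rw [Real.zero_rpow (by norm_num), Real.one_rpow]
    norm_num
  have hv2 : (∫ h in Ioi (1:ℝ), h ^ (-(3:ℝ)/2)) = 2 := by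
    rw [integral_Ioi_rpow_of_lt (by norm_num) one_pos]
    rw [Real.one_rpow]
    norm_num
  have hb1 : (∫ h in Ioc (0:ℝ) 1, d h) ≤ 2 := by
    rw [← hv1]
    refine setIntegral_mono_on hd1int hr1int measurableSet_Ioc (fun h hh => ?_)
    have hh0 : h ∈ Ioi (0:ℝ) := hh.1
    have h1 : (0:ℝ) < 1 + h := by have := hh.1; linarith
    calc d h ≤ h ^ (-(1:ℝ)/2) * (1/(1+h)) := (hbnd h hh0).2.2
      _ ≤ h ^ (-(1:ℝ)/2) * 1 := by
          apply mul_le_mul_of_nonneg_left _ (Real.rpow_pos_of_pos hh.1 _).le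
          rw [div_le_one h1]; linarith [mem_Ioi.mp hh0]
      _ = h ^ (-(1:ℝ)/2) := mul_one _
  have hb2 : (∫ h in Ioi (1:ℝ), d h) ≤ 2 := by
    rw [← hv2]
    refine setIntegral_mono_on hd2int hr2int measurableSet_Ioi (fun h hh => ?_)
    rw [mem_Ioi] at hh
    have hh0 : h ∈ Ioi (0:ℝ) := by rw [mem_Ioi]; linarith
    have h1 : (0:ℝ) < 1 + h := by linarith
    calc d h ≤ h ^ (-(1:ℝ)/2) * (1/(1+h)) := (hbnd h hh0).2.2
      _ ≤ h ^ (-(1:ℝ)/2) * h ^ (-(1:ℝ)) := by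
          apply mul_le_mul_of_nonneg_left _ (Real.rpow_pos_of_pos (by linarith) _).le
          rw [Real.rpow_neg_one, one_div]
          exact inv_anti₀ (by linarith) (by linarith)
      _ = h ^ (-(3:ℝ)/2) := by
          rw [← Real.rpow_add (by linarith : (0:ℝ) < h)]
          norm_num
  have hdtotal : (∫ h in Ioi (0:ℝ), d h) ≤ 4 := by
    have := setIntegral_union (Ioc_disjoint_Ioi le_rfl) measurableSet_Ioi hd1int hd2int
      (f := d) (μ := volume)
    rw [hsplitset] at this
    rw [this]; linarith
  have hglow : (∫ h in Ioi (0:ℝ), g0 h) - 4 ≤ ∫ h in Ioi (0:ℝ), g h := by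
    have : (∫ h in Ioi (0:ℝ), d h) = (∫ h in Ioi (0:ℝ), g0 h) - ∫ h in Ioi (0:ℝ), g h :=
      integral_sub hg0int hgint
    linarith
  have hJlow : 1 - 4 * Real.sqrt (l / (2 * π)) ≤ JFun Y l := by
    rw [hJeq]
    have h3 := mul_le_mul_of_nonneg_left hglow hsq
    have h2 : Real.sqrt (l / (2 * π)) * (∫ h in Ioi (0:ℝ), g0 h) = 1 := g0_integral hl
    rw [mul_sub] at h3
    linarith
  have hsqb : 4 * Real.sqrt (l / (2 * π)) ≤ 2 * Real.sqrt l := by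
    have e1 : 4 * Real.sqrt (l / (2 * π)) = Real.sqrt (4^2 * (l / (2*π))) := by
      rw [Real.sqrt_mul (by positivity), Real.sqrt_sq (by norm_num)]
    have e2 : 2 * Real.sqrt l = Real.sqrt (2^2 * l) := by
      rw [Real.sqrt_mul (by positivity), Real.sqrt_sq (by norm_num)]
    rw [e1, e2]
    apply Real.sqrt_le_sqrt
    have hpi := Real.pi_gt_three
    have hppos := Real.pi_pos
    rw [show (4:ℝ)^2 * (l / (2*π)) = 8*l/π by field_simp; ring, div_le_iff₀ hppos]
    nlinarith
  exact ⟨hJ0, hJ1, by linarith⟩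

set_option maxHeartbeats 1000000 in
/-- Sato's criterion for the CGMY time-change subordinator: with
`f(y) = e^{-(B²-A²)y/2} J_Y(B²y)`, the integral `∫_0^∞ y^{-(1+Y/2)} (√f(y) - 1)² dy`
is finite, so the CGMY subordinator is absolutely continuous with respect to the
one-sided stable `Y/2` subordinator. -/
theorem cgmy_subordinator_absolutely_continuous (Y B A : ℝ) (hY0 : 0 < Y) (hY2 : Y < 2)
    (hB : 0 < B) (hAB : |A| < B) :
    ∫⁻ y in Ioi (0:ℝ),
        ENNReal.ofReal (y ^ (-(1 + Y/2)) *
          (Real.sqrt (Real.exp (-((B^2 - A^2) * y / 2)) * JFun Y (B^2 * y)) - 1)^2) < ⊤ := by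
  have habs := abs_lt.mp hAB
  have hA2 : A^2 < B^2 := by nlinarith [habs.1, habs.2]
  set c : ℝ := (B^2 - A^2)/2 with hc
  have hc0 : 0 < c := by rw [hc]; linarith
  set K : ℝ := (c + 2*B)^2 with hK
  have hK0 : 0 < K := by positivity
  -- pointwise bounds
  have key : ∀ y ∈ Ioi (0:ℝ),
      (Real.sqrt (Real.exp (-((B^2 - A^2) * y / 2)) * JFun Y (B^2 * y)) - 1)^2 ≤ 1
      ∧ (y ≤ 1 →
        (Real.sqrt (Real.exp (-((B^2 - A^2) * y / 2)) * JFun Y (B^2 * y)) - 1)^2 ≤ K * y) := by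
    intro y hy
    rw [mem_Ioi] at hy
    set F : ℝ := Real.exp (-((B^2 - A^2) * y / 2)) * JFun Y (B^2 * y) with hF
    obtain ⟨hJ0, hJ1, hJlow⟩ := JFun_bounds Y (B^2 * y) hY0 hY2 (by positivity)
    have hexp1 : Real.exp (-((B^2 - A^2) * y / 2)) ≤ 1 := by
      rw [Real.exp_le_one_iff]
      nlinarith
    have hexp0 : 0 < Real.exp (-((B^2 - A^2) * y / 2)) := Real.exp_pos _
    have hexplow : 1 - c * y ≤ Real.exp (-((B^2 - A^2) * y / 2)) := by
      have := Real.add_one_le_exp (-((B^2 - A^2) * y / 2))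
      rw [hc]; linarith
    have hF0 : 0 ≤ F := mul_nonneg hexp0.le hJ0
    have hF1 : F ≤ 1 := by
      calc F ≤ 1 * 1 := mul_le_mul hexp1 hJ1 hJ0 zero_le_one
        _ = 1 := mul_one 1
    have hsqB : Real.sqrt (B^2 * y) = B * Real.sqrt y := by
      rw [Real.sqrt_mul (by positivity), Real.sqrt_sq hB.le]
    have h1F : 1 - F ≤ c * y + 2 * B * Real.sqrt y := by
      have e1 : 1 - F = (1 - Real.exp (-((B^2 - A^2) * y / 2)))
          + Real.exp (-((B^2 - A^2) * y / 2)) * (1 - JFun Y (B^2 * y)) := by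
        rw [hF]; ring
      have e2 : Real.exp (-((B^2 - A^2) * y / 2)) * (1 - JFun Y (B^2 * y))
          ≤ 1 * (1 - JFun Y (B^2 * y)) :=
        mul_le_mul_of_nonneg_right hexp1 (by linarith)
      have e3 : 1 - JFun Y (B^2 * y) ≤ 2 * (B * Real.sqrt y) := by
        rw [← hsqB]; linarith
      rw [e1]; linarith
    have hsF1 : Real.sqrt F ≤ 1 := by
      rw [show (1:ℝ) = Real.sqrt 1 by rw [Real.sqrt_one]]
      exact Real.sqrt_le_sqrt hF1
    have hFsF : F ≤ Real.sqrt F := by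
      have h2 : Real.sqrt (F^2) ≤ Real.sqrt F := Real.sqrt_le_sqrt (by nlinarith)
      rwa [Real.sqrt_sq hF0] at h2
    have hmain : (Real.sqrt F - 1)^2 ≤ (1 - F)^2 := by
      rw [show (Real.sqrt F - 1)^2 = (1 - Real.sqrt F)^2 by ring]
      apply pow_le_pow_left₀ (by linarith) (by linarith)
    constructor
    · calc (Real.sqrt F - 1)^2 ≤ (1 - F)^2 := hmain
        _ ≤ 1 := by nlinarith
    · intro hy1
      have hsy : 0 ≤ Real.sqrt y := Real.sqrt_nonneg y
      have hs1 : Real.sqrt y ≤ 1 := by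
        rw [show (1:ℝ) = Real.sqrt 1 by rw [Real.sqrt_one]]
        exact Real.sqrt_le_sqrt hy1
      have hyy : Real.sqrt y * Real.sqrt y = y := Real.mul_self_sqrt hy.le
      have step : c * y + 2 * B * Real.sqrt y ≤ (c + 2*B) * Real.sqrt y := by nlinarith
      calc (Real.sqrt F - 1)^2 ≤ (1 - F)^2 := hmain
        _ ≤ ((c + 2*B) * Real.sqrt y)^2 := by
            apply pow_le_pow_left₀ (by linarith) (by linarith)
        _ = K * y := by rw [mul_pow, Real.sq_sqrt hy.le, hK]
  -- split the integral
  rw [show Ioi (0:ℝ) = Ioc 0 1 ∪ Ioi 1 from (Ioc_union_Ioi_eq_Ioi zero_le_one).symm,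
    lintegral_union measurableSet_Ioi (Ioc_disjoint_Ioi le_rfl)]
  refine ENNReal.add_lt_top.mpr ⟨?_, ?_⟩
  · -- near 0
    have hbnd : ∀ y ∈ Ioc (0:ℝ) 1,
        ENNReal.ofReal (y ^ (-(1 + Y/2)) *
          (Real.sqrt (Real.exp (-((B^2 - A^2) * y / 2)) * JFun Y (B^2 * y)) - 1)^2)
          ≤ ENNReal.ofReal (K * y ^ (-(Y/2))) := by
      intro y hy
      apply ENNReal.ofReal_le_ofReal
      have hy0 : (0:ℝ) < y := hy.1
      have h1 := (key y hy.1).2 hy.2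
      have hrp : 0 < y ^ (-(1 + Y/2)) := Real.rpow_pos_of_pos hy0 _
      calc y ^ (-(1 + Y/2)) *
            (Real.sqrt (Real.exp (-((B^2 - A^2) * y / 2)) * JFun Y (B^2 * y)) - 1)^2
          ≤ y ^ (-(1 + Y/2)) * (K * y) := mul_le_mul_of_nonneg_left h1 hrp.le
        _ = K * (y ^ (-(1 + Y/2)) * y ^ (1:ℝ)) := by rw [Real.rpow_one]; ring
        _ = K * y ^ (-(Y/2)) := by
            rw [← Real.rpow_add hy0, show -(1 + Y/2) + 1 = -(Y/2) by ring]
    calc ∫⁻ y in Ioc (0:ℝ) 1, ENNReal.ofReal (y ^ (-(1 + Y/2)) *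
            (Real.sqrt (Real.exp (-((B^2 - A^2) * y / 2)) * JFun Y (B^2 * y)) - 1)^2)
        ≤ ∫⁻ y in Ioc (0:ℝ) 1, ENNReal.ofReal (K * y ^ (-(Y/2))) := by
          refine setLIntegral_mono (by fun_prop) hbnd
      _ < ⊤ := by
          apply IntegrableOn.setLIntegral_lt_top
          apply Integrable.const_mul
          rw [← IntegrableOn, ← intervalIntegrable_iff_integrableOn_Ioc_of_le zero_le_one]
          exact intervalIntegral.intervalIntegrable_rpow' (by linarith)
  · -- tail
    have hbnd : ∀ y ∈ Ioi (1:ℝ),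
        ENNReal.ofReal (y ^ (-(1 + Y/2)) *
          (Real.sqrt (Real.exp (-((B^2 - A^2) * y / 2)) * JFun Y (B^2 * y)) - 1)^2)
          ≤ ENNReal.ofReal (y ^ (-(1 + Y/2))) := by
      intro y hy
      apply ENNReal.ofReal_le_ofReal
      rw [mem_Ioi] at hy
      have hy0 : (0:ℝ) < y := by linarith
      have h1 := (key y (by rw [mem_Ioi]; linarith)).1
      have hrp : 0 < y ^ (-(1 + Y/2)) := Real.rpow_pos_of_pos hy0 _
      calc y ^ (-(1 + Y/2)) *
            (Real.sqrt (Real.exp (-((B^2 - A^2) * y / 2)) * JFun Y (B^2 * y)) - 1)^2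
          ≤ y ^ (-(1 + Y/2)) * 1 := mul_le_mul_of_nonneg_left h1 hrp.le
        _ = y ^ (-(1 + Y/2)) := mul_one _
    calc ∫⁻ y in Ioi (1:ℝ), ENNReal.ofReal (y ^ (-(1 + Y/2)) *
            (Real.sqrt (Real.exp (-((B^2 - A^2) * y / 2)) * JFun Y (B^2 * y)) - 1)^2)
        ≤ ∫⁻ y in Ioi (1:ℝ), ENNReal.ofReal (y ^ (-(1 + Y/2))) := by
          refine setLIntegral_mono (by fun_prop) hbnd
      _ < ⊤ := by
          apply IntegrableOn.setLIntegral_lt_top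
          exact integrableOn_Ioi_rpow_of_lt (by linarith) one_pos
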